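/- arXiv:2311.05624 — 2 statements merged into one kernel-verified Lean document; each statement's English description precedes it below -/
import Mathlib

section
/- Deciding whether some word of length n is accepted by a machine but not within the given time bound is undecidable: the predicate on triples (c, n, t) given by "∃ x < 2^n, (c.eval x).Dom ∧ ¬(Nat.Partrec.Code.evaln t c x).isSome" is not a computable predicate. -/
theorem limitwithsmallt_undecidable :
    ¬ ComputablePred (fun p : Nat.Partrec.Code × ℕ × ℕ =>
      ∃ x < 2 ^ p.2.1, (p.1.eval x).Dom ∧
        ¬ (Nat.Partrec.Code.evaln p.2.2 p.1 x).isSome) := by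
  intro h
  apply ComputablePred.halting_problem 0
  have hmap : Computable (fun c : Nat.Partrec.Code => (c, (0 : ℕ), (0 : ℕ))) :=
    Computable.pair Computable.id (Computable.const (0, 0))
  obtain ⟨f, hf, hfe⟩ := ComputablePred.computable_iff.1 h
  refine (ComputablePred.computable_iff.2 ⟨fun c => f (c, 0, 0), hf.comp hmap, ?_⟩)
  funext c
  rw [← congrFun hfe (c, 0, 0)]
  rw [eq_iff_iff]
  constructor
  · intro hd
    exact ⟨0, by norm_num, hd, by simp [Nat.Partrec.Code.evaln]⟩
  · rintro ⟨x, hx, hd, _⟩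
    interval_cases x
    exact hd
end

section
/- Greedy prefix search succeeds: for every predicate P on Boolean strings and every n, if there exists a string of length n satisfying P, then there exists a string y of length n satisfying P such that for every position k < n, the k-th bit of y is true if and only if the prefix of y of length k extended by true can be completed to a string of length n satisfying P; formally: for P : List Bool → Prop and n : ℕ, (∃ x, x.length = n ∧ P x) → ∃ y, y.length = n ∧ P y ∧ ∀ k < n, (y.get? k = some true ↔ ∃ z, (y.take k ++ true :: z).length = n ∧ P (y.take k ++ true :: z)). -/
lemma greedy_aux (P : List Bool → Prop) (n : ℕ) :
    ∀ m p, p.length + m = n → (∃ z, (p ++ z).length = n ∧ P (p ++ z)) →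
    ∃ y, y.length = n ∧ P y ∧ y.take p.length = p ∧
      ∀ k, p.length ≤ k → k < n →
        (y[k]? = some true ↔
          ∃ z, (y.take k ++ true :: z).length = n ∧ P (y.take k ++ true :: z)) := by
  intro m
  induction m with
  | zero =>
    rintro p hp ⟨z, hz1, hz2⟩
    refine ⟨p ++ z, hz1, hz2, by simp [List.take_left], ?_⟩
    intro k hk1 hk2
    omega
  | succ m ih =>
    intro p hp hex
    by_cases h1 : ∃ z, ((p ++ [true]) ++ z).length = n ∧ P ((p ++ [true]) ++ z)
    · obtain ⟨y, hy1, hy2, hy3, hy4⟩ := ih (p ++ [true]) (by simp; omega) h1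
      have htake : y.take (p.length + 1) = p ++ [true] := by simpa using hy3
      have htakep : y.take p.length = p := by
        have : y.take p.length = (y.take (p.length + 1)).take p.length := by
          rw [List.take_take]
          congr 1
          omega
        rw [this, htake, List.take_left]
      have hget : y[p.length]? = some true := by
        obtain ⟨t, ht⟩ := List.take_prefix (p.length + 1) y
        rw [htake] at ht
        rw [← ht]
        simp [List.getElem?_append_right, List.getElem_append_right, Nat.sub_self]
      refine ⟨y, hy1, hy2, htakep, ?_⟩
      intro k hk1 hk2
      rcases eq_or_lt_of_le hk1 with heq | hlt
      · subst heq
        rw [htakep]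
        constructor
        · intro _
          obtain ⟨z, hz1, hz2⟩ := h1
          exact ⟨z, by simpa using hz1, by simpa using hz2⟩
        · intro _
          exact hget
      · exact hy4 k (by simpa using hlt) hk2
    · obtain ⟨z, hz1, hz2⟩ := hex
      have hzlen : z.length = m + 1 := by simp at hz1; omega
      obtain ⟨b, z', rfl⟩ : ∃ b z', z = b :: z' := by
        cases z with
        | nil => simp at hzlen
        | cons b z' => exact ⟨b, z', rfl⟩
      have hb : b = false := by
        cases b
        · rfl
        · exact absurd ⟨z', by simpa using hz1, by simpa using hz2⟩ h1
      subst hb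
      have hex' : ∃ z, ((p ++ [false]) ++ z).length = n ∧ P ((p ++ [false]) ++ z) :=
        ⟨z', by simpa using hz1, by simpa using hz2⟩
      obtain ⟨y, hy1, hy2, hy3, hy4⟩ := ih (p ++ [false]) (by simp; omega) hex'
      have htake : y.take (p.length + 1) = p ++ [false] := by simpa using hy3
      have htakep : y.take p.length = p := by
        have : y.take p.length = (y.take (p.length + 1)).take p.length := by
          rw [List.take_take]
          congr 1
          omega
        rw [this, htake, List.take_left]
      have hget : y[p.length]? = some false := by
        obtain ⟨t, ht⟩ := List.take_prefix (p.length + 1) y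
        rw [htake] at ht
        rw [← ht]
        simp [List.getElem?_append_right, List.getElem_append_right, Nat.sub_self]
      refine ⟨y, hy1, hy2, htakep, ?_⟩
      intro k hk1 hk2
      rcases eq_or_lt_of_le hk1 with heq | hlt
      · subst heq
        rw [htakep]
        constructor
        · intro hc
          rw [hget] at hc
          simp at hc
        · intro ⟨z, hz1', hz2'⟩
          exact absurd ⟨z, by simpa using hz1', by simpa using hz2'⟩ h1
      · exact hy4 k (by simpa using hlt) hk2

theorem greedy_prefix_search (P : List Bool → Prop) (n : ℕ)
    (h : ∃ x, x.length = n ∧ P x) :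
    ∃ y, y.length = n ∧ P y ∧
      ∀ k < n, (y[k]? = some true ↔
        ∃ z, (y.take k ++ true :: z).length = n ∧ P (y.take k ++ true :: z)) := by
  obtain ⟨y, hy1, hy2, _, hy4⟩ := greedy_aux P n n [] (by simp) (by simpa using h)
  exact ⟨y, hy1, hy2, fun k hk => hy4 k (by simp) hk⟩
end
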